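/- arXiv:1709.08305 — 4 statements merged into one kernel-verified Lean document; each statement's English description precedes it below -/
import Mathlib

section
/- Let g : ℝ → ℝ be a bounded continuous integrable probability density. For Re(z) > 0 define D(z) = ∫_ℝ g(ω)/(z - iω) dω. Then lim_{x→0+} D(x + iy) = π g(y) - iπ H[g](y) for each y ∈ ℝ, where H[g] denotes the Hilbert transform of g. -/
open MeasureTheory Filter Topology Set Complex

noncomputable def SPK (t : ℝ) : ℂ := 1 / (1 + I * t) + (if 1 ≤ |t| then I / t else 0)

lemma one_add_I_mul_ne (t : ℝ) : (1 + I * (t:ℂ)) ≠ 0 := by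
  intro h
  have := congrArg Complex.re h
  simp at this

lemma norm_one_add_I_mul (t : ℝ) : ‖(1 + I * (t:ℂ))‖ = Real.sqrt (1 + t^2) := by
  have : (1 + I * (t:ℂ)) = (1:ℝ) + (t:ℝ) * I := by push_cast; ring
  rw [this, Complex.norm_add_mul_I]
  norm_num

lemma ofReal_ne_zero_of_one_le {t : ℝ} (ht : 1 ≤ |t|) : (t:ℂ) ≠ 0 := by
  have : t ≠ 0 := by intro h; rw [h] at ht; simp at ht; linarith
  exact_mod_cast this

lemma spk_eq_of_one_le (t : ℝ) (ht : 1 ≤ |t|) : SPK t = I / (t * (1 + I * t)) := by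
  have h1 : (t:ℂ) ≠ 0 := ofReal_ne_zero_of_one_le ht
  have h2 := one_add_I_mul_ne t
  rw [SPK, if_pos ht, div_add_div _ _ h2 h1,
    div_eq_div_iff (mul_ne_zero h2 h1) (mul_ne_zero h1 h2)]
  have h3 : (1 * (t:ℂ) + (1 + I * t) * I) = I := by
    linear_combination (t:ℂ) * Complex.I_mul_I
  rw [h3]
  ring

lemma spk_norm_le (t : ℝ) : ‖SPK t‖ ≤ 2 * (1 + t^2)⁻¹ := by
  have hpos : (0:ℝ) < 1 + t^2 := by positivity
  have hsq : Real.sqrt (1 + t^2) ^ 2 = 1 + t^2 := Real.sq_sqrt hpos.le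
  have hsqpos : 0 < Real.sqrt (1 + t^2) := Real.sqrt_pos.2 hpos
  have h2inv : 2 * (1 + t^2)⁻¹ = 2 / (1 + t^2) := by ring
  rcases le_or_gt 1 |t| with ht | ht
  · have habs : 1 ≤ t^2 := by nlinarith [_root_.sq_abs t, abs_nonneg t]
    have hst : |t| ≤ Real.sqrt (1 + t^2) := by
      rw [show |t| = Real.sqrt (t^2) from (Real.sqrt_sq_eq_abs t).symm]
      exact Real.sqrt_le_sqrt (by linarith)
    rw [spk_eq_of_one_le t ht, norm_div, norm_mul, Complex.norm_I, norm_one_add_I_mul,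
      Complex.norm_real, Real.norm_eq_abs, h2inv,
      div_le_div_iff₀ (by positivity) hpos]
    nlinarith [_root_.sq_abs t, abs_nonneg t, hsqpos]
  · have h2 : t^2 ≤ 1 := by nlinarith [_root_.sq_abs t, abs_nonneg t]
    have h5 : 1 ≤ Real.sqrt (1 + t^2) := by nlinarith
    rw [SPK, if_neg (not_le.2 ht), add_zero, norm_div, norm_one, norm_one_add_I_mul,
      h2inv, div_le_div_iff₀ hsqpos hpos]
    nlinarith

lemma spk_continuous_part : Continuous (fun t : ℝ => 1 / (1 + I * (t:ℂ))) := by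
  apply Continuous.div continuous_const
  · continuity
  · exact fun t => one_add_I_mul_ne t

lemma spk_measurable : Measurable SPK := by
  unfold SPK
  apply Measurable.add
  · exact spk_continuous_part.measurable
  · apply Measurable.ite (measurableSet_le measurable_const measurable_norm)
    · exact measurable_const.div Complex.measurable_ofReal
    · exact measurable_const

lemma spk_integrable : Integrable SPK := by
  apply Integrable.mono' (integrable_inv_one_add_sq.const_mul 2)
  · exact spk_measurable.aestronglyMeasurable
  · exact ae_of_all _ spk_norm_le

lemma spk_re (t : ℝ) : (SPK t).re = (1 + t^2)⁻¹ := by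
  have hns : Complex.normSq (1 + I * t) = 1 + t^2 := by
    simp [Complex.normSq_apply]; ring
  rw [SPK]
  simp [Complex.div_re, hns, Complex.div_im]
  split <;> simp [Complex.div_re, Complex.normSq_apply]

lemma spk_im (t : ℝ) : (SPK t).im = -(t / (1 + t^2)) + (if 1 ≤ |t| then t⁻¹ else 0) := by
  have hns : Complex.normSq (1 + I * t) = 1 + t^2 := by
    simp [Complex.normSq_apply]; ring
  rw [SPK]
  simp [Complex.div_im, hns]
  split
  · norm_num [Complex.div_im, Complex.normSq_apply]
    ring
  · simp [div_eq_mul_inv]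

lemma integral_odd_eq_zero (f : ℝ → ℝ) (hf : ∀ t, f (-t) = - f t) : ∫ t, f t = 0 := by
  have h := MeasureTheory.integral_neg_eq_self f (volume : Measure ℝ)
  have h2 : ∫ t, f (-t) = ∫ t, (- f t) := by simp_rw [hf]
  rw [h2, integral_neg] at h
  linarith

lemma spk_integral : ∫ t : ℝ, SPK t = (Real.pi : ℂ) := by
  apply Complex.ext
  · rw [← RCLike.re_eq_complex_re, ← integral_re spk_integrable]
    simp only [RCLike.re_eq_complex_re]
    simp_rw [spk_re]
    rw [integral_univ_inv_one_add_sq]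
    simp
  · rw [← RCLike.im_eq_complex_im, ← integral_im spk_integrable]
    simp only [RCLike.im_eq_complex_im]
    simp_rw [spk_im]
    rw [integral_odd_eq_zero]
    · simp
    · intro t
      rcases le_or_gt 1 |t| with h | h
      · rw [if_pos (by rwa [abs_neg]), if_pos h]
        rw [inv_neg]
        ring
      · rw [if_neg (by rwa [abs_neg, not_le]), if_neg (not_le.2 h)]
        ring

lemma integral_comp_affine (f : ℝ → ℂ) (y x : ℝ) (hx : x ≠ 0) :
    ∫ t : ℝ, f (y - x * t) = |x⁻¹| • ∫ s : ℝ, f s := by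
  have h1 : ∀ t : ℝ, f (y - x * t) = (fun u => f (y + u)) ((-x) * t) := by
    intro t; simp only [sub_eq_add_neg, neg_mul]
  simp_rw [h1]
  rw [Measure.integral_comp_mul_left (fun u => f (y + u)) (-x)]
  rw [MeasureTheory.integral_add_left_eq_self]
  congr 1
  rw [abs_inv, abs_inv, abs_neg]

lemma one_le_norm_one_add_I_mul (t : ℝ) : 1 ≤ ‖(1 + I * (t:ℂ))‖ := by
  rw [norm_one_add_I_mul]
  have := Real.sqrt_le_sqrt (show (1:ℝ) ≤ 1 + t^2 by nlinarith)
  simpa using this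

/-- Sokhotski–Plemelj: for `g` bounded continuous integrable and
`D(z) = ∫ g(ω)/(z - iω) dω` (Re z > 0), one has
`lim_{x→0+} D(x+iy) = π g(y) - iπ H[g](y)` where `H[g]` is the Hilbert transform. -/
theorem stmt1 (g : ℝ → ℝ) (hb : ∃ C, ∀ x, |g x| ≤ C) (hc : Continuous g)
    (hint : Integrable g) (Hg : ℝ → ℝ)
    (hH : ∀ y : ℝ, Tendsto (fun ε : ℝ => ∫ s in {s : ℝ | ε ≤ |y - s|}, g s / (y - s))
        (𝓝[>] 0) (𝓝 (Real.pi * Hg y))) :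
    ∀ y : ℝ, Tendsto
      (fun x : ℝ => ∫ ω : ℝ, (g ω : ℂ) / (((x : ℂ) + Complex.I * (y : ℂ)) - Complex.I * (ω : ℂ)))
      (𝓝[>] 0)
      (𝓝 (((Real.pi * g y : ℝ) : ℂ) - Complex.I * ((Real.pi * Hg y : ℝ) : ℂ))) := by
  obtain ⟨C0, hC0⟩ := hb
  intro y
  set Tr : ℝ → ℝ := fun x => ∫ s in {s : ℝ | x ≤ |y - s|}, g s / (y - s) with hTrdef
  set B : ℝ → ℂ := fun x => ∫ t : ℝ, (g (y - x * t) : ℂ) * SPK t with hBdef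
  -- the key algebraic identity
  have key : ∀ x : ℝ, 0 < x →
      (∫ ω : ℝ, (g ω : ℂ) / (((x : ℂ) + Complex.I * (y : ℂ)) - Complex.I * (ω : ℂ)))
        = B x - Complex.I * (Tr x : ℂ) := by
    intro x hx
    have hx' : x ≠ 0 := hx.ne'
    have hxC : (x : ℂ) ≠ 0 := by exact_mod_cast hx'
    have hgx : Integrable (fun t : ℝ => g (y - x * t)) := by
      have := (hint.comp_add_left y).comp_mul_left' (R := -x) (neg_ne_zero.2 hx')
      simpa [sub_eq_add_neg, neg_mul] using this
    have hgxc : Continuous (fun t : ℝ => ((g (y - x * t) : ℝ) : ℂ)) := by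
      exact Complex.continuous_ofReal.comp (hc.comp (continuous_const.sub (continuous_const.mul continuous_id)))
    -- step A : LHS after substitution
    have stepA : (∫ ω : ℝ, (g ω : ℂ) / (((x : ℂ) + Complex.I * (y : ℂ)) - Complex.I * (ω : ℂ)))
        = ∫ t : ℝ, (g (y - x * t) : ℂ) / (1 + I * t) := by
      have hsub := integral_comp_affine
        (fun ω : ℝ => (g ω : ℂ) / (((x : ℂ) + Complex.I * (y : ℂ)) - Complex.I * (ω : ℂ))) y x hx'
      have h1 : (∫ ω : ℝ, (g ω : ℂ) / (((x : ℂ) + Complex.I * (y : ℂ)) - Complex.I * (ω : ℂ)))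
          = x • ∫ t : ℝ, (g (y - x * t) : ℂ) /
              (((x : ℂ) + Complex.I * (y : ℂ)) - Complex.I * ((y - x * t : ℝ) : ℂ)) := by
        rw [hsub, abs_of_pos (inv_pos.2 hx), smul_smul, mul_inv_cancel₀ hx', one_smul]
      rw [h1, ← integral_smul]
      refine integral_congr_ae (ae_of_all _ fun t => ?_)
      dsimp only
      have hden : ((x : ℂ) + Complex.I * (y : ℂ)) - Complex.I * ((y - x * t : ℝ) : ℂ)
          = (x : ℂ) * (1 + I * t) := by push_cast; ring
      rw [hden, Complex.real_smul]
      rw [mul_div_assoc', mul_div_mul_left _ _ hxC]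
    -- step B : truncated Hilbert integral after substitution
    have hmeasset : MeasurableSet {s : ℝ | x ≤ |y - s|} :=
      measurableSet_le measurable_const ((continuous_const.sub continuous_id).abs.measurable)
    have stepB : ((Tr x : ℝ) : ℂ)
        = ∫ t : ℝ, (if 1 ≤ |t| then ((g (y - x * t) : ℝ) : ℂ) / (t : ℂ) else 0) := by
      have hTr2 : ((Tr x : ℝ) : ℂ) = ∫ s : ℝ,
          ((Set.indicator {s : ℝ | x ≤ |y - s|} (fun s => g s / (y - s)) s : ℝ) : ℂ) := by
        rw [hTrdef]
        dsimp only
        rw [← integral_indicator hmeasset]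
        exact (integral_ofReal (𝕜 := ℂ)).symm
      rw [hTr2]
      have hsub := integral_comp_affine
        (fun s : ℝ => ((Set.indicator {s : ℝ | x ≤ |y - s|} (fun s => g s / (y - s)) s : ℝ) : ℂ)) y x hx'
      have h1 : (∫ s : ℝ, ((Set.indicator {s : ℝ | x ≤ |y - s|} (fun s => g s / (y - s)) s : ℝ) : ℂ))
          = x • ∫ t : ℝ, ((Set.indicator {s : ℝ | x ≤ |y - s|}
              (fun s => g s / (y - s)) (y - x * t) : ℝ) : ℂ) := by
        rw [hsub, abs_of_pos (inv_pos.2 hx), smul_smul, mul_inv_cancel₀ hx', one_smul]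
      rw [h1, ← integral_smul]
      refine integral_congr_ae (ae_of_all _ fun t => ?_)
      dsimp only
      rw [Set.indicator_apply]
      have hmem : ((y - x * t) ∈ {s : ℝ | x ≤ |y - s|}) ↔ (1 ≤ |t|) := by
        simp only [Set.mem_setOf_eq, sub_sub_cancel, abs_mul, abs_of_pos hx]
        exact le_mul_iff_one_le_right hx
      by_cases hcase : 1 ≤ |t|
      · rw [if_pos (hmem.2 hcase), if_pos hcase]
        rw [show y - (y - x * t) = x * t from by ring, Complex.real_smul]
        push_cast
        rw [mul_div_assoc', mul_div_mul_left _ _ hxC]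
      · rw [if_neg (fun h => hcase (hmem.1 h)), if_neg hcase]
        simp
    -- step C : splitting B
    have hp1int : Integrable (fun t : ℝ => ((g (y - x * t) : ℝ) : ℂ) / (1 + I * t)) := by
      refine Integrable.mono' hgx.abs ?_ (ae_of_all _ fun t => ?_)
      · exact (hgxc.div (continuous_const.add (continuous_const.mul Complex.continuous_ofReal)) (fun t => one_add_I_mul_ne t)).aestronglyMeasurable
      · rw [norm_div, Complex.norm_real, Real.norm_eq_abs]
        exact div_le_self (abs_nonneg _) (one_le_norm_one_add_I_mul t)
    have hp2int : Integrable
        (fun t : ℝ => (if 1 ≤ |t| then ((g (y - x * t) : ℝ) : ℂ) * (I / t) else 0)) := by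
      refine Integrable.mono' hgx.abs ?_ (ae_of_all _ fun t => ?_)
      · refine (Measurable.ite (measurableSet_le measurable_const measurable_abs)
          (hgxc.measurable.mul (measurable_const.div Complex.measurable_ofReal))
          measurable_const).aestronglyMeasurable
      · by_cases hcase : 1 ≤ |t|
        · rw [if_pos hcase, norm_mul, Complex.norm_real, Real.norm_eq_abs]
          refine mul_le_of_le_one_right (abs_nonneg _) ?_
          rw [norm_div, Complex.norm_I, Complex.norm_real, Real.norm_eq_abs]
          rw [div_le_one (by linarith)]
          exact hcase
        · rw [if_neg hcase, norm_zero]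
          exact abs_nonneg _
    have hsplit : B x = (∫ t : ℝ, ((g (y - x * t) : ℝ) : ℂ) / (1 + I * t))
        + ∫ t : ℝ, (if 1 ≤ |t| then ((g (y - x * t) : ℝ) : ℂ) * (I / t) else 0) := by
      rw [hBdef]
      dsimp only
      rw [← integral_add hp1int hp2int]
      refine integral_congr_ae (ae_of_all _ fun t => ?_)
      dsimp only
      rw [SPK, mul_add, mul_ite, mul_zero, mul_one_div]
    have hp2eq : (∫ t : ℝ, (if 1 ≤ |t| then ((g (y - x * t) : ℝ) : ℂ) * (I / t) else 0))
        = I * ∫ t : ℝ, (if 1 ≤ |t| then ((g (y - x * t) : ℝ) : ℂ) / (t : ℂ) else 0) := by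
      rw [← integral_const_mul]
      refine integral_congr_ae (ae_of_all _ fun t => ?_)
      dsimp only
      by_cases hcase : 1 ≤ |t|
      · rw [if_pos hcase, if_pos hcase]; ring
      · rw [if_neg hcase, if_neg hcase]; ring
    rw [stepA, hsplit, hp2eq, ← stepB]
    ring
  -- limit of B
  have hBlim : Tendsto B (𝓝[>] 0) (𝓝 (((Real.pi * g y : ℝ) : ℂ))) := by
    have hlim : Tendsto B (𝓝[>] 0) (𝓝 (∫ t : ℝ, ((g y : ℝ) : ℂ) * SPK t)) := by
      rw [hBdef]
      refine tendsto_integral_filter_of_dominated_convergence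
        (fun t => C0 * ‖SPK t‖) ?_ ?_ (spk_integrable.norm.const_mul C0) ?_
      · refine Eventually.of_forall fun x => ?_
        exact ((Complex.continuous_ofReal.comp (hc.comp (continuous_const.sub (continuous_const.mul continuous_id)))).aestronglyMeasurable.mul
          spk_measurable.aestronglyMeasurable)
      · refine Eventually.of_forall fun x => ae_of_all _ fun t => ?_
        rw [norm_mul, Complex.norm_real, Real.norm_eq_abs]
        exact mul_le_mul_of_nonneg_right (hC0 _) (norm_nonneg _)
      · refine ae_of_all _ fun t => ?_
        have h1 : Tendsto (fun x : ℝ => y - x * t) (𝓝 0) (𝓝 y) := by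
          have h0 : Continuous (fun x : ℝ => y - x * t) := continuous_const.sub (continuous_id.mul continuous_const)
          have := h0.tendsto 0
          simpa using this
        have h2 : Tendsto (fun x : ℝ => ((g (y - x * t) : ℝ) : ℂ)) (𝓝 0) (𝓝 ((g y : ℝ) : ℂ)) :=
          (Complex.continuous_ofReal.tendsto _).comp ((hc.tendsto y).comp h1)
        exact ((h2.mono_left nhdsWithin_le_nhds).mul_const (SPK t))
    rw [integral_const_mul, spk_integral] at hlim
    convert hlim using 2
    push_cast
    ring
  -- limit of the Hilbert part
  have hTlim : Tendsto (fun x : ℝ => Complex.I * ((Tr x : ℝ) : ℂ)) (𝓝[>] 0)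
      (𝓝 (Complex.I * ((Real.pi * Hg y : ℝ) : ℂ))) := by
    have h1 : Tendsto (fun x : ℝ => ((Tr x : ℝ) : ℂ)) (𝓝[>] 0) (𝓝 ((Real.pi * Hg y : ℝ) : ℂ)) :=
      (Complex.continuous_ofReal.tendsto _).comp (hH y)
    exact h1.const_mul Complex.I
  refine Tendsto.congr' ?_ (hBlim.sub hTlim)
  filter_upwards [self_mem_nhdsWithin] with x hx
  exact (key x hx).symm
end

section
/- Consider the planar ODE system ṙ₋ = p₁ r₋ (ε − q (r₋² + 2 r₊²)), ṙ₊ = p₁ r₊ (ε − q (r₊² + 2 r₋²)) on [0,∞)², with constants p₁, q, ε > 0. Then the fixed points are (0,0), (0, √(ε/q)), (√(ε/q), 0), and (√(ε/(3q)), √(ε/(3q))); the Jacobian at (0,0) is εp₁·Id (unstable), at (0, √(ε/q)) it is diag(−εp₁, −2εp₁) (asymptotically stable), at (√(ε/q), 0) it is diag(−2εp₁, −εp₁) (asymptotically stable), and at the symmetric fixed point the Jacobian is (2εp₁/3)·[[−1,−2],[−2,−1]], which has a positive eigenvalue 2εp₁/3 and hence that fixed point is a saddle. -/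
open MeasureTheory

noncomputable def Jm (a b c d : ℝ) : (ℝ × ℝ) →L[ℝ] (ℝ × ℝ) :=
  ((a • ContinuousLinearMap.fst ℝ ℝ ℝ + b • ContinuousLinearMap.snd ℝ ℝ ℝ).prod
    (c • ContinuousLinearMap.fst ℝ ℝ ℝ + d • ContinuousLinearMap.snd ℝ ℝ ℝ))

lemma Jm_apply (a b c d : ℝ) (u : ℝ × ℝ) : Jm a b c d u = (a*u.1 + b*u.2, c*u.1 + d*u.2) := by
  simp [Jm, Prod.ext_iff]

lemma hasD (p₁ q ε : ℝ) (v : ℝ × ℝ) :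
    HasFDerivAt (fun v : ℝ × ℝ =>
      (p₁ * v.1 * (ε - q * (v.1^2 + 2*v.2^2)), p₁ * v.2 * (ε - q * (v.2^2 + 2*v.1^2))))
      (Jm (p₁*(ε - q*(3*v.1^2+2*v.2^2))) (-(4*p₁*q*v.1*v.2))
          (-(4*p₁*q*v.1*v.2)) (p₁*(ε - q*(3*v.2^2+2*v.1^2)))) v := by
  have heq : (fun v : ℝ × ℝ =>
      (p₁ * v.1 * (ε - q * (v.1^2 + 2*v.2^2)), p₁ * v.2 * (ε - q * (v.2^2 + 2*v.1^2))))
      = (fun v : ℝ × ℝ =>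
      (p₁ * v.1 * (ε - q * (v.1*v.1 + 2*(v.2*v.2))), p₁ * v.2 * (ε - q * (v.2*v.2 + 2*(v.1*v.1))))) := by
    funext v; exact Prod.ext (by ring) (by ring)
  rw [heq]
  have hf : HasFDerivAt (fun v : ℝ × ℝ => v.1) (ContinuousLinearMap.fst ℝ ℝ ℝ) v :=
    hasFDerivAt_fst
  have hs : HasFDerivAt (fun v : ℝ × ℝ => v.2) (ContinuousLinearMap.snd ℝ ℝ ℝ) v :=
    hasFDerivAt_snd
  have h1 := (hf.const_mul p₁).mul
      ((hasFDerivAt_const ε v).sub (((hf.mul hf).add ((hs.mul hs).const_mul 2)).const_mul q))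
  have h2 := (hs.const_mul p₁).mul
      ((hasFDerivAt_const ε v).sub (((hs.mul hs).add ((hf.mul hf).const_mul 2)).const_mul q))
  refine (HasFDerivAt.prodMk h1 h2).congr_fderiv ?_
  ext <;> simp [Jm] <;> ring

/-- The truncated slow-manifold system `ṙ₋ = p₁r₋(ε − q(r₋²+2r₊²))`,
`ṙ₊ = p₁r₊(ε − q(r₊²+2r₋²))` on `[0,∞)²`: its fixed points are `(0,0)`,
`(0,√(ε/q))`, `(√(ε/q),0)`, `(√(ε/3q),√(ε/3q))`; the Jacobian at the origin is
`εp₁·Id` (unstable), at the two axis fixed points it is `diag(−εp₁,−2εp₁)` resp.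
`diag(−2εp₁,−εp₁)` (asymptotically stable), and at the symmetric fixed point it is
`(2εp₁/3)[[−1,−2],[−2,−1]]`, which has the positive eigenvalue `2εp₁/3` (saddle). -/
theorem stmt12 (p₁ q ε : ℝ) (hp : 0 < p₁) (hq : 0 < q) (hε : 0 < ε) :
    let F : ℝ × ℝ → ℝ × ℝ := fun v =>
      (p₁ * v.1 * (ε - q * (v.1^2 + 2*v.2^2)), p₁ * v.2 * (ε - q * (v.2^2 + 2*v.1^2)))
    let s := Real.sqrt (ε / (3*q))
    let t := Real.sqrt (ε / q)
    (∀ v : ℝ × ℝ, 0 ≤ v.1 → 0 ≤ v.2 →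
      (F v = 0 ↔ v = (0,0) ∨ v = (0,t) ∨ v = (t,0) ∨ v = (s,s))) ∧
    fderiv ℝ F (0,0) = (ε*p₁) • ContinuousLinearMap.id ℝ (ℝ × ℝ) ∧ 0 < ε*p₁ ∧
    (∀ u : ℝ × ℝ, fderiv ℝ F (0,t) u = (-(ε*p₁)*u.1, -(2*ε*p₁)*u.2)) ∧
    (∀ u : ℝ × ℝ, fderiv ℝ F (t,0) u = (-(2*ε*p₁)*u.1, -(ε*p₁)*u.2)) ∧
    (-(ε*p₁) < 0 ∧ -(2*ε*p₁) < 0) ∧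
    (∀ u : ℝ × ℝ, fderiv ℝ F (s,s) u =
      ((2*ε*p₁/3) * (-u.1 - 2*u.2), (2*ε*p₁/3) * (-2*u.1 - u.2))) ∧
    fderiv ℝ F (s,s) ((1:ℝ),(-1:ℝ)) = (2*ε*p₁/3) • ((1:ℝ),(-1:ℝ)) ∧ 0 < 2*ε*p₁/3 := by
  intro F s t
  have hFdef : F = fun v : ℝ × ℝ =>
      (p₁ * v.1 * (ε - q * (v.1^2 + 2*v.2^2)), p₁ * v.2 * (ε - q * (v.2^2 + 2*v.1^2))) := rfl
  have ht2 : t^2 = ε / q := Real.sq_sqrt (le_of_lt (div_pos hε hq))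
  have hs2 : s^2 = ε / (3*q) := Real.sq_sqrt (le_of_lt (div_pos hε (by positivity)))
  have htε : ε = q * t^2 := by
    rw [ht2, mul_div_cancel₀ _ hq.ne']
  have hsε : ε = 3 * q * s^2 := by
    rw [hs2, mul_div_cancel₀ _ (by positivity : (3:ℝ)*q ≠ 0)]
  have keyt : ∀ x : ℝ, 0 ≤ x → q * x^2 = ε → x = t := by
    intro x hx h
    rw [← Real.sqrt_sq hx]
    congr 1
    rw [← h]; field_simp
  have keys : ∀ x : ℝ, 0 ≤ x → 3 * q * x^2 = ε → x = s := by
    intro x hx h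
    rw [← Real.sqrt_sq hx]
    congr 1
    rw [← h]; field_simp
  refine ⟨?_, ?_, by positivity, ?_, ?_, ⟨by nlinarith, by nlinarith⟩, ?_, ?_, by positivity⟩
  · -- fixed points
    intro v hv1 hv2
    constructor
    · intro hFv
      rw [hFdef, Prod.ext_iff] at hFv
      obtain ⟨e1, e2⟩ := hFv
      simp only [Prod.fst_zero, Prod.snd_zero, mul_eq_zero] at e1 e2
      rcases e1 with (e1 | e1)
      · rcases e1 with (e1 | e1); · exact absurd e1 hp.ne'
        -- v.1 = 0
        rcases e2 with (e2 | e2)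
        · rcases e2 with (e2 | e2); · exact absurd e2 hp.ne'
          exact Or.inl (Prod.ext e1 e2)
        · -- ε = q*(v.2^2 + 2*v.1^2), v.1 = 0
          have : v.2 = t := keyt v.2 hv2 (by linear_combination -e2 - 2*q*v.1*e1)
          exact Or.inr (Or.inl (Prod.ext e1 this))
      · -- ε - q*(v.1^2+2v.2^2) = 0
        rcases e2 with (e2 | e2)
        · rcases e2 with (e2 | e2); · exact absurd e2 hp.ne'
          -- v.2 = 0
          have : v.1 = t := keyt v.1 hv1 (by linear_combination -e1 - 2*q*v.2*e2)
          exact Or.inr (Or.inr (Or.inl (Prod.ext this e2)))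
        · -- both nonlinear equations : v.1^2 = v.2^2
          have hsq : v.1^2 = v.2^2 := by nlinarith
          have h12 : v.1 = v.2 := by
            rw [← Real.sqrt_sq hv1, ← Real.sqrt_sq hv2, hsq]
          have : v.1 = s := keys v.1 hv1 (by nlinarith)
          exact Or.inr (Or.inr (Or.inr (Prod.ext this (h12 ▸ this))))
    · intro h
      rcases h with (h | h | h | h) <;> subst h <;>
          simp only [hFdef, Prod.ext_iff, Prod.fst_zero, Prod.snd_zero] <;>
          refine ⟨?_, ?_⟩
      · ring
      · ring
      · ring
      · linear_combination p₁*t*htε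
      · linear_combination p₁*t*htε
      · ring
      · linear_combination p₁*s*hsε
      · linear_combination p₁*s*hsε
  · -- Jacobian at origin
    rw [hFdef, (hasD p₁ q ε (0,0)).fderiv]
    ext <;> simp [Jm] <;> ring
  · intro u
    rw [hFdef, (hasD p₁ q ε (0,t)).fderiv, Jm_apply]
    refine Prod.ext ?_ ?_ <;> simp <;> rw [htε] <;> ring
  · intro u
    rw [hFdef, (hasD p₁ q ε (t,0)).fderiv, Jm_apply]
    refine Prod.ext ?_ ?_ <;> simp <;> rw [htε] <;> ring
  · intro u
    rw [hFdef, (hasD p₁ q ε (s,s)).fderiv, Jm_apply]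
    refine Prod.ext ?_ ?_ <;> simp <;> rw [hsε] <;> ring
  · rw [hFdef, (hasD p₁ q ε (s,s)).fderiv, Jm_apply]
    refine Prod.ext ?_ ?_ <;> simp [Prod.smul_def] <;> rw [hsε] <;> ring
end

section
/- Let H = L²(ℝ × [0,1], g dω dx), P the bounded operator (P f)(x) = ∫₀¹∫_ℝ W(x,y) f(ω,y) g(ω) dω dy (a rank structure through the Hilbert–Schmidt kernel W), M multiplication by iω, and T = M + (K/2)P with K ∈ ℝ. Suppose λ ∈ ℂ with Re(λ) > 0 is an eigenvalue of T with eigenfunction v ∈ H, and set w(x) = ∫_ℝ v(ω, x) g(ω) dω ∈ L²(0,1). If w ≠ 0, then w satisfies w = (K/2) D(λ) W[w], where D(λ) = ∫_ℝ g(ω)/(λ − iω) dω and W is the integral operator with kernel W on L²(0,1); consequently D(λ) = 2/(Kμ) for some nonzero eigenvalue μ of W. -/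
open MeasureTheory

/-- If `λ` with `Re λ > 0` is an eigenvalue of `T = iω + (K/2)P` with eigenfunction
`v`, and `w(x) = ∫ v(ω,x) g(ω) dω`, then `w = (K/2) D(λ) W[w]` with
`D(λ) = ∫ g(ω)/(λ−iω) dω`; consequently, if `w ≠ 0`, then `D(λ) = 2/(Kμ)` for some
nonzero eigenvalue `μ` of the integral operator `W`. -/
theorem stmt17 (W : ℝ → ℝ → ℝ) (hWsym : ∀ x y, W x y = W y x)
    (hWbd : ∀ x y, W x y ∈ Set.Icc (-1:ℝ) 1)
    (g : ℝ → ℝ) (hg : Continuous g) (hgnn : ∀ ω, 0 ≤ g ω) (hgint : ∫ ω, g ω = 1)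
    (K : ℝ) (lam : ℂ) (hlam : 0 < lam.re)
    (v : ℝ → ℝ → ℂ) (w : ℝ → ℂ)
    (hw : ∀ x, w x = ∫ ω : ℝ, v ω x * (g ω : ℂ))
    (hvint : ∀ x, Integrable (fun ω : ℝ => v ω x * (g ω : ℂ)))
    (hWw : ∀ x, IntervalIntegrable (fun y => (W x y : ℂ) * w y) volume 0 1)
    (hDint : Integrable (fun ω : ℝ => (g ω : ℂ) / (lam - Complex.I * (ω : ℂ))))
    (heig : ∀ ω x : ℝ, Complex.I * (ω : ℂ) * v ω x
        + (K / 2 : ℂ) * (∫ y in (0:ℝ)..1, (W x y : ℂ) * w y) = lam * v ω x) :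
    (∀ x : ℝ, w x = (K / 2 : ℂ) * (∫ ω : ℝ, (g ω : ℂ) / (lam - Complex.I * (ω : ℂ)))
        * ∫ y in (0:ℝ)..1, (W x y : ℂ) * w y) ∧
    (K ≠ 0 → (∃ x ∈ Set.Icc (0:ℝ) 1, w x ≠ 0) →
      ∃ μ : ℂ, μ ≠ 0 ∧
        (∀ x ∈ Set.Icc (0:ℝ) 1, (∫ y in (0:ℝ)..1, (W x y : ℂ) * w y) = μ * w x) ∧
        (∫ ω : ℝ, (g ω : ℂ) / (lam - Complex.I * (ω : ℂ))) = 2 / ((K : ℂ) * μ)) := by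
  have hne : ∀ ω : ℝ, lam - Complex.I * (ω : ℂ) ≠ 0 := by
    intro ω h
    have hre : (lam - Complex.I * (ω : ℂ)).re = lam.re := by
      simp [Complex.sub_re, Complex.mul_re]
    rw [h] at hre
    simp at hre
    linarith
  set D := ∫ ω : ℝ, (g ω : ℂ) / (lam - Complex.I * (ω : ℂ)) with hD
  have key : ∀ x : ℝ, w x = (K / 2 : ℂ) * D * ∫ y in (0:ℝ)..1, (W x y : ℂ) * w y := by
    intro x
    set P := ∫ y in (0:ℝ)..1, (W x y : ℂ) * w y with hP
    have hv : ∀ ω : ℝ, v ω x = (K / 2 : ℂ) * P / (lam - Complex.I * (ω : ℂ)) := by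
      intro ω
      rw [eq_div_iff (hne ω)]
      linear_combination -(heig ω x)
    rw [hw x]
    have heq : (fun ω : ℝ => v ω x * (g ω : ℂ))
        = fun ω : ℝ => ((K / 2 : ℂ) * P) * ((g ω : ℂ) / (lam - Complex.I * (ω : ℂ))) := by
      funext ω
      rw [hv ω]
      field_simp
    rw [heq, integral_const_mul]
    ring
  refine ⟨key, fun hK hx => ?_⟩
  obtain ⟨x0, _, hwx0⟩ := hx
  have hKc : (K : ℂ) ≠ 0 := Complex.ofReal_ne_zero.mpr hK
  have hDne : D ≠ 0 := by
    intro h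
    apply hwx0
    rw [key x0, h]
    ring
  refine ⟨2 / ((K : ℂ) * D), div_ne_zero two_ne_zero (mul_ne_zero hKc hDne), ?_, ?_⟩
  · intro x _
    rw [key x]
    field_simp
  · field_simp
end

section
/- Under the setup of the eigenvalue equation D(λ) = 2/(Kμ) with g an even, unimodal, continuous probability density and D(λ) = ∫_ℝ g(ω)/(λ − iω) dω for Re(λ) > 0: the restriction of D to the positive real axis, λ ↦ D(λ) for λ > 0, is real-valued, strictly decreasing, with lim_{λ→0+} D(λ) = π g(0) and lim_{λ→∞} D(λ) = 0. Consequently, for each μ > 0, the equation D(λ) = 2/(Kμ) has a (unique) positive real solution λ(μ,K) if and only if K > 2/(π g(0) μ), and λ(μ,K) → 0+ as K → (2/(π g(0) μ))+ and λ(μ,K) → ∞ as K → ∞. -/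
open MeasureTheory Filter Topology ENNReal

section
variable (g : ℝ → ℝ) (heven : ∀ x, g (-x) = g x) (hcont : Continuous g)
    (hnn : ∀ x, 0 ≤ g x) (hint : Integrable g)
    (huni : AntitoneOn g (Set.Ici 0)) (hg0 : 0 < g 0)

include heven huni in
lemma g_le_g0 : ∀ x, g x ≤ g 0 := by
  intro x
  have h1 : g x = g |x| := by
    rcases abs_cases x with ⟨h, _⟩ | ⟨h, _⟩
    · rw [h]
    · rw [h, ← heven x]
  rw [h1]
  exact huni (Set.mem_Ici.2 (le_refl 0)) (abs_nonneg x) (abs_nonneg x)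

include heven huni in
lemma g_anti_abs : ∀ x y : ℝ, |x| ≤ |y| → g y ≤ g x := by
  intro x y h
  have h1 : ∀ z : ℝ, g z = g |z| := by
    intro z
    rcases abs_cases z with ⟨hz, _⟩ | ⟨hz, _⟩
    · rw [hz]
    · rw [hz, ← heven z]
  rw [h1 x, h1 y]
  exact huni (abs_nonneg x) (abs_nonneg y) h

include hcont hnn heven huni in
lemma G_integrable (lam : ℝ) :
    Integrable (fun u : ℝ => g (lam * u) / (1 + u ^ 2)) := by
  apply Integrable.mono' (integrable_inv_one_add_sq.const_mul (g 0))
  · exact ((hcont.comp (continuous_const.mul continuous_id)).div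
      (by continuity) (fun u => by positivity)).aestronglyMeasurable
  · filter_upwards with u
    rw [Real.norm_eq_abs, abs_of_nonneg (div_nonneg (hnn _) (by positivity)), div_eq_mul_inv]
    exact mul_le_mul_of_nonneg_right (g_le_g0 g heven huni _) (by positivity)

lemma denom_ne (lam : ℝ) (hlam : 0 < lam) (ω : ℝ) : ((lam : ℂ) - Complex.I * (ω : ℂ)) ≠ 0 := by
  intro h
  have := congrArg Complex.re h
  simp at this
  linarith

lemma denom_ge (lam : ℝ) (hlam : 0 < lam) (ω : ℝ) : lam ≤ ‖(lam : ℂ) - Complex.I * (ω : ℂ)‖ := by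
  have h := Complex.abs_re_le_norm ((lam : ℂ) - Complex.I * (ω : ℂ))
  have hre : ((lam : ℂ) - Complex.I * (ω : ℂ)).re = lam := by simp
  rw [hre] at h
  calc lam ≤ |lam| := le_abs_self lam
    _ ≤ _ := h

include hint hcont hnn in
lemma D_integrable {lam : ℝ} (hlam : 0 < lam) :
    Integrable (fun ω : ℝ => (g ω : ℂ) / ((lam : ℂ) - Complex.I * (ω : ℂ))) := by
  apply Integrable.mono' (hint.div_const lam)
  · exact ((Complex.continuous_ofReal.comp hcont).div
      (by continuity) (fun ω => denom_ne lam hlam ω)).aestronglyMeasurable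
  · filter_upwards with ω
    rw [norm_div, Complex.norm_real, Real.norm_eq_abs, abs_of_nonneg (hnn ω)]
    have h2 := denom_ge lam hlam ω
    gcongr
    · exact hnn ω

include hint hcont hnn heven in
lemma D_im {lam : ℝ} (hlam : 0 < lam) :
    (∫ ω : ℝ, (g ω : ℂ) / ((lam : ℂ) - Complex.I * (ω : ℂ))).im = 0 := by
  rw [← RCLike.im_to_complex, ← integral_im (D_integrable g hcont hnn hint hlam)]
  have heq : ∀ ω : ℝ, ((g ω : ℂ) / ((lam : ℂ) - Complex.I * (ω : ℂ))).im
      = g ω * ω / (lam ^ 2 + ω ^ 2) := by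
    intro ω
    rw [Complex.div_im]
    simp [Complex.normSq_apply]
    ring
  simp only [RCLike.im_to_complex]
  simp_rw [heq]
  set h : ℝ → ℝ := fun ω => g ω * ω / (lam ^ 2 + ω ^ 2) with hh
  have hodd : ∀ ω, h (-ω) = -h ω := by
    intro ω; simp only [hh, heven]; ring
  have h1 : ∫ ω, h ω = ∫ ω, h (-ω) := (integral_neg_eq_self h volume).symm
  simp_rw [hodd, integral_neg] at h1
  linarith

include hint hcont hnn heven huni in
lemma D_re {lam : ℝ} (hlam : 0 < lam) :
    (∫ ω : ℝ, (g ω : ℂ) / ((lam : ℂ) - Complex.I * (ω : ℂ))).re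
      = ∫ u : ℝ, g (lam * u) / (1 + u ^ 2) := by
  rw [← RCLike.re_to_complex, ← integral_re (D_integrable g hcont hnn hint hlam)]
  have heq : ∀ ω : ℝ, ((g ω : ℂ) / ((lam : ℂ) - Complex.I * (ω : ℂ))).re
      = lam * g ω / (lam ^ 2 + ω ^ 2) := by
    intro ω
    rw [Complex.div_re]
    simp [Complex.normSq_apply]
    ring
  simp only [RCLike.re_to_complex]
  simp_rw [heq]
  have h := MeasureTheory.Measure.integral_comp_mul_left
    (fun ω => lam * g ω / (lam ^ 2 + ω ^ 2)) lam
  have heq2 : (fun u => lam * g (lam * u) / (lam ^ 2 + (lam * u) ^ 2))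
      = fun u => lam⁻¹ * (g (lam * u) / (1 + u ^ 2)) := by
    funext u
    have h1 : lam ^ 2 + (lam * u) ^ 2 = lam ^ 2 * (1 + u ^ 2) := by ring
    rw [h1]
    field_simp
  rw [heq2, integral_const_mul, abs_of_pos (inv_pos.2 hlam), smul_eq_mul] at h
  exact (mul_left_cancel₀ (inv_ne_zero hlam.ne') h).symm


include hcont hnn heven huni in
lemma G_cont : Continuous (fun lam : ℝ => ∫ u : ℝ, g (lam * u) / (1 + u ^ 2)) := by
  apply MeasureTheory.continuous_of_dominated
    (bound := fun u : ℝ => g 0 * (1 + u ^ 2)⁻¹)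
  · intro lam
    exact ((hcont.comp (continuous_const.mul continuous_id)).div
      (by continuity) (fun u => by positivity)).aestronglyMeasurable
  · intro lam
    filter_upwards with u
    rw [Real.norm_eq_abs, abs_of_nonneg (div_nonneg (hnn _) (by positivity)), div_eq_mul_inv]
    exact mul_le_mul_of_nonneg_right (g_le_g0 g heven huni _) (by positivity)
  · exact integrable_inv_one_add_sq.const_mul (g 0)
  · filter_upwards with u
    exact (hcont.comp (continuous_id.mul continuous_const)).div (by continuity)
      (fun lam => by positivity)

include hcont hnn heven huni in
lemma G_zero : ∫ u : ℝ, g ((0:ℝ) * u) / (1 + u ^ 2) = Real.pi * g 0 := by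
  simp_rw [zero_mul, div_eq_mul_inv, MeasureTheory.integral_const_mul,
    integral_univ_inv_one_add_sq]
  ring

include hcont hnn heven huni in
lemma G_le (lam : ℝ) : ∫ u : ℝ, g (lam * u) / (1 + u ^ 2) ≤ Real.pi * g 0 := by
  rw [← G_zero g heven hcont hnn huni]
  apply MeasureTheory.integral_mono (G_integrable g heven hcont hnn huni lam)
    (G_integrable g heven hcont hnn huni 0)
  intro u
  simp only [zero_mul, div_eq_mul_inv]
  exact mul_le_mul_of_nonneg_right (g_le_g0 g heven huni _) (by positivity)

include heven hcont hnn huni hg0 in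
lemma G_pos (lam : ℝ) : 0 < ∫ u : ℝ, g (lam * u) / (1 + u ^ 2) := by
  have hc : Continuous (fun u : ℝ => g (lam * u) / (1 + u ^ 2)) :=
    (hcont.comp (continuous_const.mul continuous_id)).div (by continuity)
      (fun u => by positivity)
  rw [MeasureTheory.integral_pos_iff_support_of_nonneg
    (fun u => div_nonneg (hnn _) (by positivity))
    (G_integrable g heven hcont hnn huni lam)]
  have hopen : IsOpen {u : ℝ | 0 < g (lam * u) / (1 + u ^ 2)} :=
    isOpen_lt continuous_const hc
  have hmem : (0:ℝ) ∈ {u : ℝ | 0 < g (lam * u) / (1 + u ^ 2)} := by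
    simp only [Set.mem_setOf_eq, mul_zero]
    positivity
  calc (0:ℝ≥0∞) < volume {u : ℝ | 0 < g (lam * u) / (1 + u ^ 2)} :=
        hopen.measure_pos volume ⟨0, hmem⟩
    _ ≤ volume (Function.support fun u => g (lam * u) / (1 + u ^ 2)) := by
        apply measure_mono
        intro u hu
        exact ne_of_gt hu


include heven hcont hnn hint huni hg0 in
lemma G_strict_anti :
    StrictAntiOn (fun lam : ℝ => ∫ u : ℝ, g (lam * u) / (1 + u ^ 2)) (Set.Ioi 0) := by
  intro a ha b hb hab
  simp only [Set.mem_Ioi] at ha hb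
  simp only
  have hle : ∀ u : ℝ, g (b * u) / (1 + u ^ 2) ≤ g (a * u) / (1 + u ^ 2) := by
    intro u
    simp only [div_eq_mul_inv]
    refine mul_le_mul_of_nonneg_right ?_ (by positivity)
    apply g_anti_abs g heven huni
    rw [abs_mul, abs_mul]
    exact mul_le_mul_of_nonneg_right (by rw [abs_of_pos ha, abs_of_pos hb]; exact hab.le)
      (abs_nonneg u)
  have hmono : (∫ u : ℝ, g (b * u) / (1 + u ^ 2)) ≤ ∫ u : ℝ, g (a * u) / (1 + u ^ 2) :=
    MeasureTheory.integral_mono (G_integrable g heven hcont hnn huni b)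
      (G_integrable g heven hcont hnn huni a) hle
  rcases lt_or_eq_of_le hmono with h | h
  · exact h
  exfalso
  -- equality: integrand difference has zero integral
  set f : ℝ → ℝ := fun u => g (a * u) / (1 + u ^ 2) - g (b * u) / (1 + u ^ 2) with hf
  have hfint : Integrable f := (G_integrable g heven hcont hnn huni a).sub
    (G_integrable g heven hcont hnn huni b)
  have hfzero : ∫ u, f u = 0 := by
    rw [hf]
    rw [MeasureTheory.integral_sub (G_integrable g heven hcont hnn huni a)
      (G_integrable g heven hcont hnn huni b)]
    rw [h]
    ring
  have hfnn : ∀ u, 0 ≤ f u := fun u => sub_nonneg.2 (hle u)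
  have hfcont : Continuous f := by
    apply Continuous.sub <;>
    exact (hcont.comp (continuous_const.mul continuous_id)).div (by continuity)
      (fun u => by positivity)
  have hfae : f =ᵐ[volume] 0 :=
    (MeasureTheory.integral_eq_zero_iff_of_nonneg hfnn hfint).1 hfzero
  have hfeq : f = 0 := (hfcont.ae_eq_iff_eq volume continuous_zero).1 hfae
  have hall : ∀ u : ℝ, g (a * u) = g (b * u) := by
    intro u
    have := congrFun hfeq u
    simp only [hf, Pi.zero_apply] at this
    have h2 : (1 + u ^ 2) ≠ 0 := by positivity
    field_simp at this
    rw [mul_comm u b] at this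
    linarith
  -- hence g t = g ((b/a) t) for all t
  set r : ℝ := b / a with hr
  have hr1 : 1 < r := (one_lt_div ha).2 hab
  have hscale : ∀ t : ℝ, g t = g (r * t) := by
    intro t
    have := hall (t / a)
    rw [mul_div_cancel₀ t ha.ne'] at this
    rw [this, hr]
    congr 1
    field_simp
  -- find t0 > 0 with g t0 > g 0 / 2
  have hev : ∀ᶠ x in 𝓝 (0:ℝ), g 0 / 2 < g x :=
    (hcont.tendsto 0).eventually (eventually_gt_nhds (by linarith))
  obtain ⟨t0, hgt0, ht0⟩ :=
    ((hev.filter_mono nhdsWithin_le_nhds).and self_mem_nhdsWithin).exists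
      (f := 𝓝[>] (0:ℝ))
  have ht0' : (0:ℝ) < t0 := ht0
  -- g (r^n * t0) = g t0
  have hpow : ∀ n : ℕ, g (r ^ n * t0) = g t0 := by
    intro n
    induction n with
    | zero => simp
    | succ n ih =>
      rw [pow_succ, mul_comm (r ^ n) r, mul_assoc, ← hscale (r ^ n * t0), ih]
  -- g x ≥ g 0 / 2 for all x ≥ 0
  have hlb : ∀ x : ℝ, 0 ≤ x → g 0 / 2 < g x := by
    intro x hx
    obtain ⟨n, hn⟩ := ((tendsto_pow_atTop_atTop_of_one_lt hr1).eventually_ge_atTop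
      (x / t0)).exists
    have hxle : x ≤ r ^ n * t0 := (div_le_iff₀ ht0').1 hn
    calc g 0 / 2 < g t0 := hgt0
      _ = g (r ^ n * t0) := (hpow n).symm
      _ ≤ g x := huni hx (mul_nonneg (pow_nonneg (by linarith) n) ht0'.le) hxle
  -- contradiction with integrability
  set I : ℝ := ∫ x, g x with hI
  have hbound : ∀ T : ℝ, 0 ≤ T → T * (g 0 / 2) ≤ I := by
    intro T hT
    have h1 : ∫ x in Set.Icc 0 T, (g 0 / 2) ≤ ∫ x in Set.Icc 0 T, g x := by
      apply MeasureTheory.setIntegral_mono_on (integrableOn_const (by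
        rw [Real.volume_Icc]; exact ENNReal.ofReal_ne_top))
        (hint.integrableOn) measurableSet_Icc
      intro x hx
      exact (hlb x hx.1).le
    have h2 : ∫ x in Set.Icc 0 T, (g 0 / 2 : ℝ) = T * (g 0 / 2) := by
      rw [MeasureTheory.setIntegral_const, measureReal_def, Real.volume_Icc, smul_eq_mul,
        ENNReal.toReal_ofReal (by linarith)]
      ring_nf
    have h3 : ∫ x in Set.Icc 0 T, g x ≤ I :=
      MeasureTheory.setIntegral_le_integral hint (Filter.Eventually.of_forall hnn)
    linarith
  have hIpos : 0 ≤ I := MeasureTheory.integral_nonneg hnn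
  have := hbound (2 * I / g 0 + 1) (by positivity)
  have h4 : (2 * I / g 0 + 1) * (g 0 / 2) = I + g 0 / 2 := by field_simp
  linarith


include heven hcont hnn huni in
lemma G_tendsto_zero :
    Tendsto (fun lam : ℝ => ∫ u : ℝ, g (lam * u) / (1 + u ^ 2)) (𝓝[>] 0)
      (𝓝 (Real.pi * g 0)) := by
  have h := ((G_cont g heven hcont hnn huni).tendsto 0).mono_left
    (nhdsWithin_le_nhds (s := Set.Ioi (0:ℝ)))
  rwa [G_zero g heven hcont hnn huni] at h

include hcont hnn in
lemma R_integrable {lam : ℝ} (hlam : 0 < lam) (hint : Integrable g) :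
    Integrable (fun ω : ℝ => lam * g ω / (lam ^ 2 + ω ^ 2)) := by
  apply Integrable.mono' (hint.div_const lam)
  · exact ((continuous_const.mul hcont).div (by continuity)
      (fun ω => by positivity)).aestronglyMeasurable
  · filter_upwards with ω
    rw [Real.norm_eq_abs, abs_of_nonneg (div_nonneg (mul_nonneg hlam.le (hnn ω))
      (by positivity))]
    rw [div_le_div_iff₀ (by positivity) hlam]
    nlinarith [hnn ω, sq_nonneg ω]

include heven hcont hnn hint huni in
lemma G_tendsto_top :
    Tendsto (fun lam : ℝ => ∫ u : ℝ, g (lam * u) / (1 + u ^ 2)) atTop (𝓝 0) := by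
  have key : ∀ lam : ℝ, 0 < lam →
      (∫ u : ℝ, g (lam * u) / (1 + u ^ 2)) ≤ (∫ x, g x) / lam := by
    intro lam hlam
    have hGe : (∫ ω : ℝ, lam * g ω / (lam ^ 2 + ω ^ 2))
        = ∫ u : ℝ, g (lam * u) / (1 + u ^ 2) := by
      have := D_re g heven hcont hnn hint huni hlam
      rw [← this]
      rw [← RCLike.re_to_complex, ← integral_re (D_integrable g hcont hnn hint hlam)]
      congr 1
      funext ω
      rw [RCLike.re_to_complex, Complex.div_re]
      simp [Complex.normSq_apply]
      ring
    rw [← hGe]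
    rw [← MeasureTheory.integral_div]
    apply MeasureTheory.integral_mono (R_integrable g hcont hnn hlam hint)
      (hint.div_const lam)
    intro ω
    rw [div_le_div_iff₀ (by positivity) hlam]
    nlinarith [hnn ω, sq_nonneg ω]
  apply squeeze_zero'
  · filter_upwards [eventually_gt_atTop (0:ℝ)] with lam hlam
    exact MeasureTheory.integral_nonneg (fun u => div_nonneg (hnn _) (by positivity))
  · filter_upwards [eventually_gt_atTop (0:ℝ)] with lam hlam
    exact key lam hlam
  · exact Tendsto.div_atTop tendsto_const_nhds tendsto_id

end

/-- For an even, unimodal, continuous probability density `g` with `g(0) > 0`, the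
function `D(λ) = ∫ g(ω)/(λ−iω) dω` is real-valued and strictly decreasing on the
positive real axis, with `D(0+) = πg(0)` and `D(∞) = 0`; consequently for `μ > 0` the
equation `D(λ) = 2/(Kμ)` has a unique positive solution `λ(μ,K)` iff
`K > 2/(πg(0)μ)`, and `λ(μ,K) → 0+` as `K → (2/(πg(0)μ))+`, `λ(μ,K) → ∞` as `K → ∞`. -/
theorem stmt18 (g : ℝ → ℝ) (heven : ∀ x, g (-x) = g x) (hcont : Continuous g)
    (hnn : ∀ x, 0 ≤ g x) (hint : Integrable g) (hprob : ∫ ω, g ω = 1)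
    (huni : AntitoneOn g (Set.Ici 0)) (hg0 : 0 < g 0) :
    let D : ℝ → ℂ := fun lam => ∫ ω : ℝ, (g ω : ℂ) / ((lam : ℂ) - Complex.I * (ω : ℂ))
    (∀ lam > (0:ℝ), (D lam).im = 0) ∧
    StrictAntiOn (fun lam => (D lam).re) (Set.Ioi 0) ∧
    Tendsto (fun lam => (D lam).re) (𝓝[>] 0) (𝓝 (Real.pi * g 0)) ∧
    Tendsto (fun lam => (D lam).re) atTop (𝓝 0) ∧
    (∀ μ > (0:ℝ), ∀ K > (0:ℝ),
      ((∃! lam : ℝ, 0 < lam ∧ (D lam).re = 2 / (K * μ)) ↔ 2 / (Real.pi * g 0 * μ) < K)) ∧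
    (∀ μ > (0:ℝ), ∀ lamF : ℝ → ℝ,
      (∀ K, 2 / (Real.pi * g 0 * μ) < K → 0 < lamF K ∧ (D (lamF K)).re = 2 / (K * μ)) →
      Tendsto lamF (𝓝[>] (2 / (Real.pi * g 0 * μ))) (𝓝[>] 0) ∧
      Tendsto lamF atTop atTop) := by
  intro D
  set G : ℝ → ℝ := fun lam => ∫ u : ℝ, g (lam * u) / (1 + u ^ 2) with hG
  have hDre : ∀ lam : ℝ, 0 < lam → (D lam).re = G lam :=
    fun lam h => D_re g heven hcont hnn hint huni h
  have hanti : StrictAntiOn G (Set.Ioi 0) := G_strict_anti g heven hcont hnn hint huni hg0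
  have hanti' : AntitoneOn G (Set.Ioi 0) := hanti.antitoneOn
  have hpos : ∀ lam : ℝ, 0 < G lam := fun lam => G_pos g heven hcont hnn huni hg0 lam
  have hle : ∀ lam, G lam ≤ Real.pi * g 0 := fun lam => G_le g heven hcont hnn huni lam
  have hlt : ∀ lam : ℝ, 0 < lam → G lam < Real.pi * g 0 := by
    intro lam hlam
    calc G lam < G (lam/2) := hanti (Set.mem_Ioi.2 (by linarith)) (Set.mem_Ioi.2 hlam)
          (by linarith)
      _ ≤ _ := hle _
  have h0 : Tendsto G (𝓝[>] 0) (𝓝 (Real.pi * g 0)) := G_tendsto_zero g heven hcont hnn huni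
  have htop : Tendsto G atTop (𝓝 0) := G_tendsto_top g heven hcont hnn hint huni
  have hcontG : Continuous G := G_cont g heven hcont hnn huni
  refine ⟨fun lam hlam => D_im g heven hcont hnn hint hlam, ?_, ?_, ?_, ?_, ?_⟩
  · intro x hx y hy hxy
    simp only
    rw [hDre x hx, hDre y hy]
    exact hanti hx hy hxy
  · apply h0.congr'
    filter_upwards [self_mem_nhdsWithin] with lam hlam
    exact (hDre lam hlam).symm
  · apply htop.congr'
    filter_upwards [eventually_gt_atTop 0] with lam hlam
    exact (hDre lam hlam).symm
  · intro μ hμ K hK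
    constructor
    · rintro ⟨lam, ⟨hlam, heqq⟩, -⟩
      have h1 : 2 / (K * μ) < Real.pi * g 0 := by
        rw [← heqq, hDre lam hlam]; exact hlt lam hlam
      rw [div_lt_iff₀ (by positivity)] at h1
      rw [div_lt_iff₀ (by positivity)]
      calc (2:ℝ) < Real.pi * g 0 * (K * μ) := h1
        _ = K * (Real.pi * g 0 * μ) := by ring
    · intro hK'
      set c : ℝ := 2 / (K * μ) with hc
      have hc0 : 0 < c := by positivity
      have hcπ : c < Real.pi * g 0 := by
        rw [hc, div_lt_iff₀ (by positivity)]
        rw [div_lt_iff₀ (by positivity)] at hK'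
        calc (2:ℝ) < K * (Real.pi * g 0 * μ) := hK'
          _ = Real.pi * g 0 * (K * μ) := by ring
      obtain ⟨a, hca, ha⟩ := ((h0.eventually (eventually_gt_nhds hcπ)).and
        self_mem_nhdsWithin).exists
      have ha' : (0:ℝ) < a := ha
      obtain ⟨b, hcb, hab⟩ := ((htop.eventually (eventually_lt_nhds hc0)).and
        (eventually_ge_atTop (a+1))).exists
      have hab' : a ≤ b := by linarith
      obtain ⟨lam, hmem, heqq⟩ := intermediate_value_Icc' hab' hcontG.continuousOn
        (Set.mem_Icc.2 ⟨hcb.le, hca.le⟩)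
      have hlam : 0 < lam := lt_of_lt_of_le ha' hmem.1
      refine ⟨lam, ⟨hlam, by rw [hDre lam hlam, heqq]⟩, ?_⟩
      rintro y ⟨hy, hyeq⟩
      apply hanti.injOn (Set.mem_Ioi.2 hy) (Set.mem_Ioi.2 hlam)
      rw [hDre y hy] at hyeq
      rw [hyeq, heqq]
  · intro μ hμ lamF hlamF
    set c₀ : ℝ := 2 / (Real.pi * g 0 * μ) with hc₀
    have hc₀pos : 0 < c₀ := by positivity
    have hval : 2 / (c₀ * μ) = Real.pi * g 0 := by
      rw [hc₀]; field_simp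
    have hcont2 : Tendsto (fun K : ℝ => 2 / (K * μ)) (𝓝 c₀) (𝓝 (Real.pi * g 0)) := by
      rw [← hval]
      exact (continuousAt_const.div ((continuousAt_id).mul continuousAt_const)
        (mul_pos hc₀pos hμ).ne').tendsto
    constructor
    · rw [tendsto_nhdsWithin_iff]
      constructor
      · rw [tendsto_order]
        constructor
        · intro l hl
          filter_upwards [self_mem_nhdsWithin] with K hK
          exact lt_trans hl (hlamF K hK).1
        · intro ε hε
          have hFε : G ε < Real.pi * g 0 := hlt ε hε
          filter_upwards [self_mem_nhdsWithin,
            (hcont2.mono_left nhdsWithin_le_nhds).eventually (eventually_gt_nhds hFε)]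
            with K hK h2K
          by_contra hcon
          push_neg at hcon
          have h3 : G (lamF K) ≤ G ε := hanti' (Set.mem_Ioi.2 hε)
            (Set.mem_Ioi.2 (hlamF K hK).1) hcon
          have h4 : (D (lamF K)).re = 2 / (K * μ) := (hlamF K hK).2
          rw [hDre _ (hlamF K hK).1] at h4
          rw [h4] at h3
          linarith
      · filter_upwards [self_mem_nhdsWithin] with K hK
        exact Set.mem_Ioi.2 (hlamF K hK).1
    · rw [tendsto_atTop]
      intro M
      set M' : ℝ := max M 1 with hM'
      have hM'pos : 0 < M' := lt_of_lt_of_le one_pos (le_max_right M 1)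
      have hGM' : 0 < G M' := hpos M'
      have htend : Tendsto (fun K : ℝ => 2 / (K * μ)) atTop (𝓝 0) :=
        Tendsto.div_atTop tendsto_const_nhds (Tendsto.atTop_mul_const hμ tendsto_id)
      filter_upwards [eventually_gt_atTop c₀,
        htend.eventually (eventually_lt_nhds hGM')] with K hK h2K
      by_contra hcon
      push_neg at hcon
      have hKle : lamF K ≤ M' := le_trans hcon.le (le_max_left M 1)
      have h3 : G M' ≤ G (lamF K) := hanti' (Set.mem_Ioi.2 (hlamF K hK).1)
        (Set.mem_Ioi.2 hM'pos) hKle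
      have h4 : (D (lamF K)).re = 2 / (K * μ) := (hlamF K hK).2
      rw [hDre _ (hlamF K hK).1] at h4
      rw [h4] at h3
      linarith
end
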